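/- arXiv:2303.00504 — 2 statements merged into one kernel-verified Lean document; each statement's English description precedes it below -/
import Mathlib

section
/- Let d ≥ 1. Let μ and ν be finite Borel measures on ℝ^d with compact support such that μ(ℝ^d) ≥ ν(ℝ^d), μ does not charge small sets, and μ and ν are mutually singular. Let ϑ : [0,∞) → [0,∞) be continuous, strictly concave and strictly increasing, and set c(x,y) = ϑ(|x−y|). Then every semicoupling q of μ and ν minimizing ∫ c dq among semicouplings has first marginal of the form 1_B · μ for some Borel set B ⊆ ℝ^d, i.e. the density of the first marginal of q with respect to μ is μ-a.e. {0,1}-valued. -/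
set_option maxHeartbeats 1000000
set_option synthInstance.maxHeartbeats 400000

open MeasureTheory Filter Set

open Metric RealInnerProductSpace
open scoped ENNReal NNReal

noncomputable section

/-- Euclidean space `ℝ^d`. -/
abbrev Eucl (d : ℕ) := EuclideanSpace ℝ (Fin d)

/-- The half-open unit cube `[0,1)^d`. -/
def unitCube (d : ℕ) : Set (Eucl d) := {x | ∀ i, x i ∈ Set.Ico (0 : ℝ) 1}

/-- `μ` does not charge small sets: it gives no mass to `(d-1)`-rectifiable sets,
i.e. `μ (f '' ℝ^(d-1)) = 0` for every Lipschitz map `f : ℝ^(d-1) → ℝ^d`. -/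
def DoesNotChargeSmallSets (d : ℕ) (μ : Measure (Eucl d)) : Prop :=
  ∀ (f : Eucl (d - 1) → Eucl d) (K : NNReal), LipschitzWith K f → μ (Set.range f) = 0

/-- `q` is a semicoupling of `μ` and `ν`: its first marginal is `≤ μ` and its second
marginal equals `ν`. -/
def IsSemicoupling {d : ℕ} (μ ν : Measure (Eucl d)) (q : Measure (Eucl d × Eucl d)) :
    Prop :=
  Measure.map Prod.fst q ≤ μ ∧ Measure.map Prod.snd q = ν

namespace OptSemiAux

variable {m : ℕ}

lemma le_of_sq_le_sq' {a b : ℝ} (h : a^2 ≤ b^2) (hb : 0 ≤ b) : a ≤ b := by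
  calc a ≤ |a| := le_abs_self a
  _ = Real.sqrt (a^2) := (Real.sqrt_sq_eq_abs a).symm
  _ ≤ Real.sqrt (b^2) := Real.sqrt_le_sqrt h
  _ = b := Real.sqrt_sq hb

lemma norm_sq_eq (w : Eucl m) : ‖w‖ ^ 2 = ∑ j, (w j) ^ 2 := by
  rw [EuclideanSpace.norm_eq, Real.sq_sqrt (by positivity)]
  simp [Real.norm_eq_abs, sq_abs]

lemma abs_coord_le (w : Eucl m) (j : Fin m) : |w j| ≤ ‖w‖ := by
  have h1 : (w j)^2 ≤ ‖w‖^2 := by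
    rw [norm_sq_eq]
    exact Finset.single_le_sum (f := fun j => (w j)^2) (fun i _ => sq_nonneg _)
      (Finset.mem_univ j)
  exact le_of_sq_le_sq' (by simpa [sq_abs] using h1) (norm_nonneg w)

/-- deletion of the `i`-th coordinate -/
def del (i : Fin (m+1)) (w : Eucl (m+1)) : Eucl m :=
  WithLp.toLp 2 (fun j => w (i.succAbove j))

lemma del_sub (i : Fin (m+1)) (w w' : Eucl (m+1)) :
    del i (w - w') = del i w - del i w' := by ext j; simp [del]

lemma norm_sq_split (i : Fin (m+1)) (w : Eucl (m+1)) :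
    ‖w‖^2 = (w i)^2 + ‖del i w‖^2 := by
  rw [norm_sq_eq, norm_sq_eq]
  exact Fin.sum_univ_succAbove (fun j => (w j)^2) i

lemma norm_del_le (i : Fin (m+1)) (w : Eucl (m+1)) :
    ‖del i w‖ ≤ ‖w‖ := by
  have := norm_sq_split i w
  exact le_of_sq_le_sq' (by nlinarith) (norm_nonneg _)

lemma inner_split (i : Fin (m+1)) (v e : Eucl (m+1)) :
    ⟪v, e⟫ = v i * e i + ⟪del i v, del i e⟫ := by
  rw [PiLp.inner_apply, PiLp.inner_apply]
  simp only [RCLike.inner_apply, conj_trivial]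
  rw [Fin.sum_univ_succAbove (fun j => e j * v j) i, mul_comm (e i) (v i)]
  rfl

lemma coordLip (j : Fin m) : LipschitzWith 1 (fun w : Eucl m => w j) := by
  apply LipschitzWith.of_dist_le_mul
  intro w w'
  rw [NNReal.coe_one, one_mul, Real.dist_eq, dist_eq_norm]
  exact abs_coord_le (w - w') j

/-- The set of points of `C` admitting an exterior tangent ball of radius `δ` is covered by
countably many Lipschitz images of `ℝ^(d-1)`. -/
lemma rectCover {n : ℕ} (C : Set (Eucl (n+1))) {δ : ℝ} (hδ : 0 < δ) :
    ∃ (ι : Type) (_ : Countable ι)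
      (F : ι → Eucl n → Eucl (n+1)),
      (∀ t, ∃ K : NNReal, LipschitzWith K (F t)) ∧
      {x | x ∈ C ∧ ∃ u : Eucl (n+1), ‖u‖ = 1 ∧
          Metric.ball (x + δ • u) δ ∩ C = ∅} ⊆ ⋃ t, Set.range (F t) := by
  classical
  set s : ℝ := Real.sqrt ((n : ℝ)+1) with hs_def
  have hs_sq : s^2 = (n : ℝ)+1 := Real.sq_sqrt (by positivity)
  have hsnn : 0 ≤ s := Real.sqrt_nonneg _
  have hs1 : 1 ≤ s := by nlinarith [Nat.cast_nonneg (α := ℝ) n]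
  have hs0 : 0 < s := lt_of_lt_of_le one_pos hs1
  set ε : ℝ := 1/(4*s) with hε_def
  have hε : 0 < ε := by positivity
  set ρ : ℝ := ε * δ with hρ_def
  have hρ : 0 < ρ := by positivity
  set L : ℝ := 2*(s+1) with hL_def
  have hL0 : 0 ≤ L := by positivity
  -- finite net on the sphere
  have hsub : sphere (0 : Eucl (n+1)) 1 ⊆ ⋃ e ∈ sphere (0 : Eucl (n+1)) 1, ball e ε :=
    fun u hu => mem_biUnion hu (mem_ball_self hε)
  obtain ⟨net, hnet_sub, hnet_fin, hnet_cov⟩ :=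
    (isCompact_sphere (0 : Eucl (n+1)) 1).elim_finite_subcover_image (fun e _ => isOpen_ball) hsub
  -- countable dense set
  obtain ⟨D, hDc, hDd⟩ := TopologicalSpace.exists_countable_dense (Eucl (n+1))
  -- pieces
  set P : Eucl (n+1) → Eucl (n+1) → Set (Eucl (n+1)) := fun e z =>
    {x | (x ∈ C ∧ ∃ u : Eucl (n+1), ‖u‖ = 1 ∧ ‖u - e‖ < ε ∧ Metric.ball (x + δ • u) δ ∩ C = ∅)
      ∧ x ∈ ball z ρ} with hP_def
  -- the key pairwise estimate
  have pair : ∀ (e : Eucl (n+1)), ‖e‖ = 1 → ∀ (i : Fin (n+1)), (∀ j, |e j| ≤ |e i|) → ∀ z : Eucl (n+1),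
      ∀ x₁ ∈ P e z, ∀ x₂ ∈ P e z, ‖x₂ - x₁‖ ≤ L * ‖del i (x₂ - x₁)‖ := by
    rintro e he i hi z x₁ ⟨⟨hx₁C, u₁, hu₁, hue₁, hb₁⟩, hx₁z⟩
      x₂ ⟨⟨hx₂C, u₂, hu₂, hue₂, hb₂⟩, hx₂z⟩
    set v := x₂ - x₁ with hv_def
    have hvnorm : ‖v‖ ≤ 2*ρ := by
      have ht := dist_triangle x₂ z x₁
      rw [mem_ball] at hx₁z hx₂z
      have h2 : dist z x₁ < ρ := by rw [dist_comm]; exact hx₁z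
      rw [hv_def, ← dist_eq_norm]
      linarith
    have hball : ∀ (x x' u : Eucl (n+1)), ‖u‖ = 1 → Metric.ball (x + δ • u) δ ∩ C = ∅ → x' ∈ C →
        ⟪x' - x, u⟫ ≤ ‖x' - x‖^2/(2*δ) := by
      intro x x' u hu hbe hx'C
      have hnot : x' ∉ Metric.ball (x + δ • u) δ := fun h =>
        (Set.eq_empty_iff_forall_notMem.1 hbe x' ⟨h, hx'C⟩)
      rw [mem_ball, dist_eq_norm] at hnot
      push_neg at hnot
      have heq : x' - (x + δ • u) = (x' - x) - δ • u := by abel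
      rw [heq] at hnot
      have hsq : δ^2 ≤ ‖(x' - x) - δ • u‖^2 := by
        nlinarith [norm_nonneg ((x' - x) - δ • u)]
      rw [norm_sub_sq_real, real_inner_smul_right, norm_smul, Real.norm_eq_abs,
        abs_of_pos hδ, hu, mul_one] at hsq
      rw [le_div_iff₀ (by positivity)]
      nlinarith
    have h1 := hball x₁ x₂ u₁ hu₁ hb₁ hx₂C
    have h2 := hball x₂ x₁ u₂ hu₂ hb₂ hx₁C
    have hx12 : x₁ - x₂ = -v := by rw [hv_def]; abel
    rw [hx12, inner_neg_left, norm_neg] at h2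
    have hhalf : ‖v‖^2/(2*δ) ≤ ε * ‖v‖ := by
      rw [div_le_iff₀ (by positivity)]
      have hm : ‖v‖ * ‖v‖ ≤ ‖v‖ * (2*ρ) := mul_le_mul_of_nonneg_left hvnorm (norm_nonneg v)
      calc ‖v‖^2 ≤ ‖v‖ * (2*ρ) := by nlinarith [norm_nonneg v]
      _ = ε*‖v‖*(2*δ) := by rw [hρ_def]; ring
    have hcs1 : |⟪v, u₁ - e⟫| ≤ ε * ‖v‖ := by
      refine le_trans (abs_real_inner_le_norm _ _) ?_
      have h := mul_le_mul_of_nonneg_left hue₁.le (norm_nonneg v)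
      linarith
    have hcs2 : |⟪v, u₂ - e⟫| ≤ ε * ‖v‖ := by
      refine le_trans (abs_real_inner_le_norm _ _) ?_
      have h := mul_le_mul_of_nonneg_left hue₂.le (norm_nonneg v)
      linarith
    have hce : |⟪v, e⟫| ≤ 2*ε*‖v‖ := by
      have hi1 : ⟪v, e⟫ = ⟪v, u₁⟫ - ⟪v, u₁ - e⟫ := by rw [inner_sub_right]; ring
      have hi2 : ⟪v, e⟫ = ⟪v, u₂⟫ - ⟪v, u₂ - e⟫ := by rw [inner_sub_right]; ring
      have ha1 := abs_le.1 hcs1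
      have ha2 := abs_le.1 hcs2
      rw [abs_le]
      constructor
      · rw [hi2]; linarith
      · rw [hi1]; linarith
    -- coordinate estimates
    have hde : ‖del i e‖ ≤ 1 := le_trans (norm_del_le i e) (le_of_eq he)
    have hinner2 : |⟪del i v, del i e⟫| ≤ ‖del i v‖ := by
      refine le_trans (abs_real_inner_le_norm _ _) ?_
      nlinarith [norm_nonneg (del i v)]
    have hsplit := inner_split i v e
    have hvi_ei : |v i * e i| ≤ |⟪v, e⟫| + ‖del i v‖ := by
      have hre : v i * e i = ⟪v, e⟫ - ⟪del i v, del i e⟫ := by rw [hsplit]; ring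
      rw [hre]
      refine le_trans (abs_sub _ _) ?_
      linarith
    have hei : 1 ≤ s * |e i| := by
      have hsum : (1:ℝ) = ∑ j, (e j)^2 := by
        rw [← norm_sq_eq, he]; norm_num
      have hbound : ∑ j, (e j)^2 ≤ ((n:ℝ)+1) * (e i)^2 := by
        calc ∑ j, (e j)^2 ≤ ∑ _j : Fin (n+1), (e i)^2 :=
          Finset.sum_le_sum (fun j _ => by
            nlinarith [hi j, abs_nonneg (e j), sq_abs (e j), sq_abs (e i)])
        _ = ((n:ℝ)+1) * (e i)^2 := by
          rw [Finset.sum_const, Finset.card_univ, Fintype.card_fin]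
          push_cast
          ring
      have hsq1 : 1 ≤ (s*|e i|)^2 := by
        rw [mul_pow, hs_sq]
        nlinarith [sq_abs (e i)]
      nlinarith [mul_nonneg hsnn (abs_nonneg (e i))]
    have hvi : |v i| ≤ s * (|⟪v, e⟫| + ‖del i v‖) := by
      calc |v i| ≤ |v i| * (s * |e i|) := le_mul_of_one_le_right (abs_nonneg _) hei
      _ = s * (|v i| * |e i|) := by ring
      _ = s * |v i * e i| := by rw [abs_mul]
      _ ≤ s * (|⟪v, e⟫| + ‖del i v‖) := mul_le_mul_of_nonneg_left hvi_ei hsnn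
    have hnv : ‖v‖ ≤ |v i| + ‖del i v‖ := by
      refine le_of_sq_le_sq' ?_ (by positivity)
      rw [norm_sq_split i v]
      nlinarith [abs_nonneg (v i), norm_nonneg (del i v), sq_abs (v i)]
    have hfinal : ‖v‖ ≤ 2*ε*s*‖v‖ + (s+1) * ‖del i v‖ := by
      calc ‖v‖ ≤ |v i| + ‖del i v‖ := hnv
      _ ≤ s * (|⟪v, e⟫| + ‖del i v‖) + ‖del i v‖ := by linarith
      _ ≤ s * (2*ε*‖v‖ + ‖del i v‖) + ‖del i v‖ := by nlinarith [hce]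
      _ = 2*ε*s*‖v‖ + (s+1)*‖del i v‖ := by ring
    have hhalf2 : 2*ε*s = 1/2 := by
      rw [hε_def]
      field_simp
      ring
    rw [hhalf2] at hfinal
    rw [hL_def]
    linarith
  -- building one Lipschitz chart per piece
  have build : ∀ e z : Eucl (n+1), ‖e‖ = 1 → ∃ F : Eucl n → Eucl (n+1),
      (∃ K : NNReal, LipschitzWith K F) ∧ P e z ⊆ range F := by
    intro e z he
    obtain ⟨i, hi⟩ := Finite.exists_max (fun j : Fin (n+1) => |e j|)
    have hpair := pair e he i hi z
    set A := del i '' (P e z) with hA_def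
    set g := Function.invFunOn (del i) (P e z) with hg_def
    have hgmem : ∀ a ∈ A, g a ∈ P e z ∧ del i (g a) = a := by
      intro a ha
      obtain ⟨x, hx, hxa⟩ := ha
      exact ⟨Function.invFunOn_mem ⟨x, hx, hxa⟩, Function.invFunOn_eq ⟨x, hx, hxa⟩⟩
    have hgl : LipschitzOnWith (Real.toNNReal L) g A := by
      apply LipschitzOnWith.of_dist_le_mul
      intro a ha b hb
      obtain ⟨ha1, ha2⟩ := hgmem a ha
      obtain ⟨hb1, hb2⟩ := hgmem b hb
      calc dist (g a) (g b) = ‖g a - g b‖ := dist_eq_norm _ _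
      _ ≤ L * ‖del i (g a - g b)‖ := hpair (g b) hb1 (g a) ha1
      _ = L * dist a b := by rw [del_sub, ha2, hb2, ← dist_eq_norm]
      _ = (Real.toNNReal L : ℝ) * dist a b := by rw [Real.coe_toNNReal _ hL0]
    have hcoord : ∀ j : Fin (n+1), ∃ gj : Eucl n → ℝ,
        LipschitzWith (Real.toNNReal L) gj ∧ EqOn (fun a => g a j) gj A := by
      intro j
      have hcl : LipschitzOnWith (Real.toNNReal L) (fun a => g a j) A := by
        have := (coordLip j).comp_lipschitzOnWith hgl
        rw [one_mul] at this
        exact this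
      exact hcl.extend_real
    choose G hGlip hGeq using hcoord
    set F : Eucl n → Eucl (n+1) := fun a => WithLp.toLp 2 (fun j => G j a)
      with hF_def
    have hFcoord : ∀ a j, F a j = G j a := fun a j => rfl
    refine ⟨F, ⟨Real.toNNReal (L * s), ?_⟩, ?_⟩
    · apply LipschitzWith.of_dist_le_mul
      intro a b
      rw [Real.coe_toNNReal _ (by positivity)]
      have hcomp : ∀ j, |G j a - G j b| ≤ L * dist a b := by
        intro j
        have := (hGlip j).dist_le_mul a b
        rwa [Real.dist_eq, Real.coe_toNNReal _ hL0] at this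
      have hsq : dist (F a) (F b)^2 ≤ (s * (L * dist a b))^2 := by
        rw [dist_eq_norm, norm_sq_eq, mul_pow, hs_sq]
        have hsum : ∑ j, ((F a - F b) j)^2 ≤ ∑ _j : Fin (n+1), (L * dist a b)^2 := by
          refine Finset.sum_le_sum (fun j _ => ?_)
          have h1 : (F a - F b) j = G j a - G j b := rfl
          rw [h1]
          nlinarith [hcomp j, abs_nonneg (G j a - G j b), sq_abs (G j a - G j b)]
        calc ∑ j, ((F a - F b) j)^2 ≤ ∑ _j : Fin (n+1), (L * dist a b)^2 := hsum
        _ = ((n:ℝ)+1) * (L * dist a b)^2 := by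
          rw [Finset.sum_const, Finset.card_univ, Fintype.card_fin]
          push_cast
          ring
      have := le_of_sq_le_sq' hsq (by positivity)
      calc dist (F a) (F b) ≤ s * (L * dist a b) := this
      _ = L * s * dist a b := by ring
    · intro x hx
      have hax : del i x ∈ A := mem_image_of_mem _ hx
      obtain ⟨hgx, hgxeq⟩ := hgmem _ hax
      have hxg : ‖x - g (del i x)‖ ≤ 0 := by
        have := hpair (g (del i x)) hgx x hx
        rw [del_sub, hgxeq, sub_self, norm_zero, mul_zero] at this
        exact this
      have hxeq : x = g (del i x) := by
        have := norm_le_zero_iff.1 hxg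
        rw [sub_eq_zero] at this
        exact this
      refine mem_range.2 ⟨del i x, ?_⟩
      ext j
      have h1 : F (del i x) j = G j (del i x) := rfl
      rw [h1, ← hGeq j hax]
      show g (del i x) j = x j
      rw [← hxeq]
  -- assembling
  haveI : Countable ↥net := hnet_fin.countable.to_subtype
  haveI : Countable ↥D := hDc.to_subtype
  have hnorm1 : ∀ t : ↥net × ↥D, ‖(t.1 : Eucl (n+1))‖ = 1 := by
    intro t
    have := hnet_sub t.1.2
    rwa [mem_sphere_zero_iff_norm] at this
  refine ⟨↥net × ↥D, inferInstance,
    fun t => Classical.choose (build t.1.1 t.2.1 (hnorm1 t)), ?_, ?_⟩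
  · intro t
    exact (Classical.choose_spec (build t.1.1 t.2.1 (hnorm1 t))).1
  · rintro x ⟨hxC, u, hu, hub⟩
    have husph : u ∈ sphere (0 : Eucl (n+1)) 1 := mem_sphere_zero_iff_norm.2 hu
    obtain ⟨e, he_net, hue⟩ := mem_iUnion₂.1 (hnet_cov husph)
    obtain ⟨z, hzD, hzx⟩ := hDd.exists_dist_lt x hρ
    refine mem_iUnion.2 ⟨(⟨e, he_net⟩, ⟨z, hzD⟩), ?_⟩
    apply (Classical.choose_spec (build e z (by
      have := hnet_sub he_net
      rwa [mem_sphere_zero_iff_norm] at this))).2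
    refine ⟨⟨hxC, u, hu, ?_, hub⟩, mem_ball.2 hzx⟩
    rw [← dist_eq_norm]
    exact mem_ball.1 hue

lemma meas_sptCompl {X : Type*} [MetricSpace X] [SecondCountableTopology X] [MeasurableSpace X]
    (m : Measure X) : m {x | ¬ ∀ r : ℝ, 0 < r → 0 < m (Metric.ball x r)} = 0 := by
  apply measure_null_of_locally_null
  intro x hx
  simp only [mem_setOf_eq, not_forall] at hx
  obtain ⟨r, hr, hm⟩ := hx
  refine ⟨Metric.ball x r, ?_, ?_⟩
  · exact mem_nhdsWithin_of_mem_nhds (Metric.ball_mem_nhds x hr)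
  · simpa using hm

lemma spt_isClosed {X : Type*} [MetricSpace X] [MeasurableSpace X] (m : Measure X) :
    IsClosed {x | ∀ r : ℝ, 0 < r → 0 < m (Metric.ball x r)} := by
  rw [← isOpen_compl_iff]
  rw [Metric.isOpen_iff]
  intro x hx
  simp only [mem_compl_iff, mem_setOf_eq, not_forall] at hx
  obtain ⟨r, hr, hm⟩ := hx
  have hm0 : m (Metric.ball x r) = 0 := by simpa using hm
  refine ⟨r/2, by positivity, ?_⟩
  intro y hy
  simp only [mem_compl_iff, mem_setOf_eq, not_forall]
  refine ⟨r/2, by positivity, ?_⟩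
  have hsub : Metric.ball y (r/2) ⊆ Metric.ball x r := by
    intro w hw
    have h1 := Metric.mem_ball.1 hw
    have h2 := Metric.mem_ball.1 hy
    rw [Metric.mem_ball]
    calc dist w x ≤ dist w y + dist y x := dist_triangle w y x
    _ < r/2 + r/2 := add_lt_add h1 h2
    _ = r := by ring
  have := measure_mono_null hsub hm0
  simp [this]

end OptSemiAux

/-- **Indicator density of optimal semicouplings.** Under the hypotheses of the
uniqueness lemma, every optimal semicoupling has first marginal of the form `1_B ⬝ μ`,
i.e. equal to the restriction of `μ` to some Borel set `B`. -/
theorem optimal_semicoupling_first_marginal_restrict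
    {d : ℕ} (hd : 1 ≤ d)
    (μ ν : Measure (Eucl d)) [IsFiniteMeasure μ] [IsFiniteMeasure ν]
    (hμsupp : ∃ K : Set (Eucl d), IsCompact K ∧ μ Kᶜ = 0)
    (hνsupp : ∃ K : Set (Eucl d), IsCompact K ∧ ν Kᶜ = 0)
    (hmass : ν Set.univ ≤ μ Set.univ)
    (hsmall : DoesNotChargeSmallSets d μ)
    (hsing : Measure.MutuallySingular μ ν)
    (ϑ : ℝ → ℝ)
    (hϑc : ContinuousOn ϑ (Set.Ici 0))
    (hϑconc : StrictConcaveOn ℝ (Set.Ici 0) ϑ)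
    (hϑmono : StrictMonoOn ϑ (Set.Ici 0))
    (hϑnonneg : ∀ x : ℝ, 0 ≤ x → 0 ≤ ϑ x)
    (q : Measure (Eucl d × Eucl d))
    (hq : IsSemicoupling μ ν q)
    (hopt : ∀ q' : Measure (Eucl d × Eucl d), IsSemicoupling μ ν q' →
      (∫⁻ p, ENNReal.ofReal (ϑ ‖p.1 - p.2‖) ∂q) ≤
        ∫⁻ p, ENNReal.ofReal (ϑ ‖p.1 - p.2‖) ∂q') :
    ∃ B : Set (Eucl d), MeasurableSet B ∧ Measure.map Prod.fst q = μ.restrict B := by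
  obtain ⟨n, rfl⟩ : ∃ n, d = n + 1 := ⟨d - 1, (Nat.succ_pred_eq_of_pos hd).symm⟩
  clear hd
  classical
  obtain ⟨K₁, hK₁c, hK₁⟩ := hμsupp
  obtain ⟨K₂, hK₂c, hK₂⟩ := hνsupp
  have hfst : Measure.map Prod.fst q ≤ μ := hq.1
  have hsnd : Measure.map Prod.snd q = ν := hq.2
  haveI hqfin : IsFiniteMeasure q := by
    constructor
    have h1 : q Set.univ = ν Set.univ := by
      rw [← hsnd, Measure.map_apply measurable_snd MeasurableSet.univ, Set.preimage_univ]
    rw [h1]; exact measure_lt_top ν _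
  set η := Measure.map Prod.fst q with hη_def
  haveI : IsFiniteMeasure η := isFiniteMeasure_of_le μ hfst
  set θ := μ - η with hθ_def
  have hθη : θ + η = μ := Measure.sub_add_cancel_of_le hfst
  have hθle : θ ≤ μ := Measure.sub_le
  haveI : IsFiniteMeasure θ := isFiniteMeasure_of_le μ hθle
  set C := {x : Eucl (n+1) | ∀ r : ℝ, 0 < r → 0 < θ (Metric.ball x r)} with hC_def
  have hCclosed : IsClosed C := OptSemiAux.spt_isClosed θ
  have hCmeas : MeasurableSet C := hCclosed.measurableSet
  set f : Eucl (n+1) × Eucl (n+1) → ℝ≥0∞ := fun p => ENNReal.ofReal (ϑ ‖p.1 - p.2‖) with hf_def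
  have hϑmono' : MonotoneOn ϑ (Set.Ici 0) := hϑmono.monotoneOn
  -- q is concentrated on K₁ ×ˢ K₂
  have hqK : q ((K₁ ×ˢ K₂)ᶜ) = 0 := by
    rw [Set.compl_prod_eq_union]
    apply measure_union_null
    · have h2 : q (K₁ᶜ ×ˢ (univ : Set (Eucl (n+1)))) = η K₁ᶜ := by
        rw [hη_def, Measure.map_apply measurable_fst hK₁c.isClosed.measurableSet.compl]
        congr 1
        ext p
        simp
      rw [h2]
      exact le_antisymm (le_trans (Measure.le_iff'.1 hfst K₁ᶜ) hK₁.le) zero_le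
    · have h2 : q ((univ : Set (Eucl (n+1))) ×ˢ K₂ᶜ) = ν K₂ᶜ := by
        rw [← hsnd, Measure.map_apply measurable_snd hK₂c.isClosed.measurableSet.compl]
        congr 1
        ext p
        simp
      rw [h2]
      exact hK₂
  -- the transport cost of q is finite
  have hIq_fin : ∫⁻ p, f p ∂q < ⊤ := by
    obtain ⟨R₁, hR₁⟩ := hK₁c.isBounded.subset_closedBall 0
    obtain ⟨R₂, hR₂⟩ := hK₂c.isBounded.subset_closedBall 0
    set M : ℝ := |R₁| + |R₂| with hM_def
    have hM0 : 0 ≤ M := by positivity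
    have hbound : ∀ p ∈ K₁ ×ˢ K₂, f p ≤ ENNReal.ofReal (ϑ M) := by
      rintro p ⟨hp1, hp2⟩
      apply ENNReal.ofReal_le_ofReal
      apply hϑmono' (mem_Ici.2 (norm_nonneg _)) (mem_Ici.2 hM0)
      have h1 : ‖p.1‖ ≤ R₁ := by simpa [mem_closedBall, dist_zero_right] using hR₁ hp1
      have h2 : ‖p.2‖ ≤ R₂ := by simpa [mem_closedBall, dist_zero_right] using hR₂ hp2
      calc ‖p.1 - p.2‖ ≤ ‖p.1‖ + ‖p.2‖ := norm_sub_le _ _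
      _ ≤ M := by rw [hM_def]; have := le_abs_self R₁; have := le_abs_self R₂; linarith
    have hae : ∀ᵐ p ∂q, f p ≤ ENNReal.ofReal (ϑ M) := by
      rw [ae_iff]
      refine measure_mono_null (fun p hp => ?_) hqK
      simp only [mem_setOf_eq, not_le] at hp
      intro hmem
      exact absurd (hbound p hmem) (not_le.2 hp)
    calc ∫⁻ p, f p ∂q ≤ ∫⁻ _, ENNReal.ofReal (ϑ M) ∂q := lintegral_mono_ae hae
    _ = ENNReal.ofReal (ϑ M) * q Set.univ := by rw [lintegral_const]
    _ < ⊤ := ENNReal.mul_lt_top ENNReal.ofReal_lt_top (measure_lt_top q _)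
  -- CLAIM 1 : optimality forces sources to be at least as close as any unused mass
  have claim1 : ∀ x y x₁ : Eucl (n+1), (∀ r : ℝ, 0 < r → 0 < q (Metric.ball (x, y) r)) →
      x₁ ∈ C → ‖x - y‖ ≤ ‖x₁ - y‖ := by
    intro x y x₁ hxy hx₁
    by_contra hlt
    push_neg at hlt
    set r : ℝ := (‖x - y‖ - ‖x₁ - y‖)/5 with hr_def
    have hr : 0 < r := by rw [hr_def]; linarith
    set S := (Metric.ball x r) ×ˢ (Metric.ball y r) with hS_def
    have hSmeas : MeasurableSet S := (isOpen_ball.prod isOpen_ball).measurableSet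
    have hm₀ : 0 < q S := by rw [hS_def, ball_prod_same]; exact hxy r hr
    have hm₁ : 0 < θ (Metric.ball x₁ r) := hx₁ r hr
    have hm₀fin : q S ≠ ⊤ := measure_ne_top q S
    have hm₁fin : θ (Metric.ball x₁ r) ≠ ⊤ := measure_ne_top θ _
    set d' := min (q S) (θ (Metric.ball x₁ r)) with hd'_def
    have hd'0 : 0 < d' := lt_min hm₀ hm₁
    have hd'fin : d' ≠ ⊤ := ne_top_of_le_ne_top hm₀fin (min_le_left _ _)
    set c : ℝ≥0∞ := d' / q S with hc_def
    have hc1 : c ≤ 1 := ENNReal.div_le_of_le_mul (by rw [one_mul]; exact min_le_left _ _)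
    set κ := q.restrict S with hκ_def
    set ν₂ := Measure.map Prod.snd (c • κ) with hν₂_def
    set ξ := (θ (Metric.ball x₁ r))⁻¹ • ((θ.restrict (Metric.ball x₁ r)).prod ν₂) with hξ_def
    set q'' := q.restrict Sᶜ + (1 - c) • κ + ξ with hq''_def
    have hκuniv : κ Set.univ = q S := by
      rw [hκ_def, Measure.restrict_apply MeasurableSet.univ, Set.univ_inter]
    have hcκ : c * q S = d' := by
      rw [hc_def]
      exact ENNReal.div_mul_cancel (ne_of_gt hm₀) hm₀fin
    have hν₂univ : ν₂ Set.univ = d' := by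
      rw [hν₂_def, Measure.map_apply measurable_snd MeasurableSet.univ, Set.preimage_univ,
        Measure.smul_apply, smul_eq_mul, hκuniv, hcκ]
    haveI : IsFiniteMeasure κ := by
      constructor
      rw [hκuniv]
      exact hm₀fin.lt_top
    haveI : IsFiniteMeasure ν₂ := by
      constructor
      rw [hν₂univ]
      exact hd'fin.lt_top
    haveI : IsFiniteMeasure (θ.restrict (Metric.ball x₁ r)) := by
      constructor
      rw [Measure.restrict_apply MeasurableSet.univ, Set.univ_inter]
      exact hm₁fin.lt_top
    have hξfst : Measure.map Prod.fst ξ =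
        ((θ (Metric.ball x₁ r))⁻¹ * d') • θ.restrict (Metric.ball x₁ r) := by
      rw [hξ_def, Measure.map_smul, Measure.map_fst_prod, hν₂univ, smul_smul]
    have hξsnd : Measure.map Prod.snd ξ = ν₂ := by
      rw [hξ_def, Measure.map_smul, Measure.map_snd_prod, Measure.restrict_apply
        MeasurableSet.univ, Set.univ_inter, smul_smul,
        ENNReal.inv_mul_cancel (ne_of_gt hm₁) hm₁fin, one_smul]
    have hfst'' : Measure.map Prod.fst q'' ≤ μ := by
      rw [hq''_def, Measure.map_add _ _ measurable_fst, Measure.map_add _ _ measurable_fst,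
        Measure.map_smul, hξfst, Measure.le_iff']
      intro s
      have hsplit : Measure.map Prod.fst (q.restrict Sᶜ) s + Measure.map Prod.fst κ s = η s := by
        rw [← Measure.add_apply, ← Measure.map_add _ _ measurable_fst, hκ_def,
          Measure.restrict_compl_add_restrict hSmeas, hη_def]
      have h1 : ((1 - c) • Measure.map Prod.fst κ) s ≤ Measure.map Prod.fst κ s := by
        rw [Measure.smul_apply, smul_eq_mul]
        calc (1-c) * Measure.map Prod.fst κ s ≤ 1 * Measure.map Prod.fst κ s :=
          mul_le_mul_left tsub_le_self _
        _ = Measure.map Prod.fst κ s := one_mul _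
      have h2 : (((θ (Metric.ball x₁ r))⁻¹ * d') • θ.restrict (Metric.ball x₁ r)) s ≤ θ s := by
        rw [Measure.smul_apply, smul_eq_mul]
        have hle1 : (θ (Metric.ball x₁ r))⁻¹ * d' ≤ 1 := by
          rw [← ENNReal.div_eq_inv_mul]
          exact ENNReal.div_le_of_le_mul (by rw [one_mul]; exact min_le_right _ _)
        calc (θ (Metric.ball x₁ r))⁻¹ * d' * θ.restrict (Metric.ball x₁ r) s
            ≤ 1 * θ.restrict (Metric.ball x₁ r) s := mul_le_mul_left hle1 _
        _ = θ.restrict (Metric.ball x₁ r) s := one_mul _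
        _ ≤ θ s := Measure.le_iff'.1 Measure.restrict_le_self s
      calc (Measure.map Prod.fst (q.restrict Sᶜ) + (1-c) • Measure.map Prod.fst κ
            + ((θ (Metric.ball x₁ r))⁻¹ * d') • θ.restrict (Metric.ball x₁ r)) s
          = Measure.map Prod.fst (q.restrict Sᶜ) s + ((1-c) • Measure.map Prod.fst κ) s
            + (((θ (Metric.ball x₁ r))⁻¹ * d') • θ.restrict (Metric.ball x₁ r)) s := by
            rw [Measure.add_apply, Measure.add_apply]
      _ ≤ Measure.map Prod.fst (q.restrict Sᶜ) s + Measure.map Prod.fst κ s + θ s := by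
            gcongr
      _ = η s + θ s := by rw [hsplit]
      _ = μ s := by
            conv_rhs => rw [← hθη]
            rw [Measure.add_apply, add_comm]
    have hsnd'' : Measure.map Prod.snd q'' = ν := by
      rw [hq''_def, Measure.map_add _ _ measurable_snd, Measure.map_add _ _ measurable_snd,
        Measure.map_smul, hξsnd, hν₂_def, Measure.map_smul, add_assoc, ← add_smul,
        tsub_add_cancel_of_le hc1, one_smul, ← Measure.map_add _ _ measurable_snd, hκ_def,
        Measure.restrict_compl_add_restrict hSmeas, hsnd]
    have hq''semi : IsSemicoupling μ ν q'' := ⟨hfst'', hsnd''⟩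
    have hcost := hopt q'' hq''semi
    set D₀ : ℝ := ‖x - y‖ - 2*r with hD₀_def
    set D₁ : ℝ := ‖x₁ - y‖ + 2*r with hD₁_def
    have hD₁0 : 0 ≤ D₁ := by
      rw [hD₁_def]
      positivity
    have hD₁D₀ : D₁ < D₀ := by
      rw [hD₀_def, hD₁_def, hr_def]
      linarith
    have hD₀0 : 0 ≤ D₀ := le_trans hD₁0 hD₁D₀.le
    have hκlb : ENNReal.ofReal (ϑ D₀) * q S ≤ ∫⁻ p, f p ∂κ := by
      have hae : ∀ᵐ p ∂κ, ENNReal.ofReal (ϑ D₀) ≤ f p := by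
        rw [hκ_def]
        filter_upwards [ae_restrict_mem hSmeas] with p hp
        obtain ⟨hp1, hp2⟩ := hp
        apply ENNReal.ofReal_le_ofReal
        apply hϑmono' (mem_Ici.2 hD₀0) (mem_Ici.2 (norm_nonneg _))
        have h1 : dist p.1 x < r := mem_ball.1 hp1
        have h2 : dist p.2 y < r := mem_ball.1 hp2
        have ht : dist x y ≤ dist x p.1 + dist p.1 p.2 + dist p.2 y := dist_triangle4 x p.1 p.2 y
        rw [dist_comm p.1 x] at h1
        have hxy' : ‖x - y‖ = dist x y := (dist_eq_norm _ _).symm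
        have hp' : ‖p.1 - p.2‖ = dist p.1 p.2 := (dist_eq_norm _ _).symm
        rw [hD₀_def, hxy', hp']
        linarith
      have hconst : ∫⁻ _, ENNReal.ofReal (ϑ D₀) ∂κ = ENNReal.ofReal (ϑ D₀) * q S := by
        rw [lintegral_const, hκuniv]
      rw [← hconst]
      exact lintegral_mono_ae hae
    have hξuniv : ξ Set.univ = d' := by
      rw [hξ_def, Measure.smul_apply, smul_eq_mul, ← Set.univ_prod_univ, Measure.prod_prod,
        Measure.restrict_apply MeasurableSet.univ, Set.univ_inter, hν₂univ, ← mul_assoc,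
        ENNReal.inv_mul_cancel (ne_of_gt hm₁) hm₁fin, one_mul]
    have hξnull : ξ (((Metric.ball x₁ r) ×ˢ (Metric.ball y r))ᶜ) = 0 := by
      rw [hξ_def, Measure.smul_apply, smul_eq_mul]
      have h0 : ((θ.restrict (Metric.ball x₁ r)).prod ν₂)
          (((Metric.ball x₁ r) ×ˢ (Metric.ball y r))ᶜ) = 0 := by
        rw [Set.compl_prod_eq_union]
        apply measure_union_null
        · rw [Measure.prod_prod, Measure.restrict_apply isOpen_ball.measurableSet.compl]
          rw [Set.compl_inter_self, measure_empty, zero_mul]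
        · rw [Measure.prod_prod]
          have hν₂y : ν₂ (Metric.ball y r)ᶜ = 0 := by
            rw [hν₂_def, Measure.map_apply measurable_snd isOpen_ball.measurableSet.compl,
              Measure.smul_apply, smul_eq_mul, hκ_def,
              Measure.restrict_apply (measurable_snd isOpen_ball.measurableSet.compl)]
            have hempty : Prod.snd ⁻¹' (Metric.ball y r)ᶜ ∩ S = ∅ := by
              apply Set.eq_empty_iff_forall_notMem.2
              rintro p ⟨hc1, hc2⟩
              rw [hS_def] at hc2
              exact hc1 (Set.mem_prod.1 hc2).2
            rw [hempty, measure_empty, mul_zero]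
          rw [hν₂y, mul_zero]
      rw [h0, mul_zero]
    have hξub : ∫⁻ p, f p ∂ξ ≤ ENNReal.ofReal (ϑ D₁) * d' := by
      have hae : ∀ᵐ p ∂ξ, f p ≤ ENNReal.ofReal (ϑ D₁) := by
        rw [ae_iff]
        refine measure_mono_null (fun p hp => ?_) hξnull
        simp only [mem_setOf_eq, not_le] at hp
        intro hmem
        obtain ⟨hp1, hp2⟩ := hmem
        have hfle : f p ≤ ENNReal.ofReal (ϑ D₁) := by
          apply ENNReal.ofReal_le_ofReal
          apply hϑmono' (mem_Ici.2 (norm_nonneg _)) (mem_Ici.2 hD₁0)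
          have h1 : dist p.1 x₁ < r := mem_ball.1 hp1
          have h2 : dist p.2 y < r := mem_ball.1 hp2
          have ht : dist p.1 p.2 ≤ dist p.1 x₁ + dist x₁ y + dist y p.2 :=
            dist_triangle4 p.1 x₁ y p.2
          have hxy' : ‖x₁ - y‖ = dist x₁ y := (dist_eq_norm _ _).symm
          have hp' : ‖p.1 - p.2‖ = dist p.1 p.2 := (dist_eq_norm _ _).symm
          rw [dist_comm y p.2] at ht
          rw [hD₁_def, hxy', hp']
          linarith
        exact absurd hfle (not_le.2 hp)
      calc ∫⁻ p, f p ∂ξ ≤ ∫⁻ _, ENNReal.ofReal (ϑ D₁) ∂ξ := lintegral_mono_ae hae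
      _ = ENNReal.ofReal (ϑ D₁) * ξ Set.univ := by rw [lintegral_const]
      _ = ENNReal.ofReal (ϑ D₁) * d' := by rw [hξuniv]
    have hIκ_fin : ∫⁻ p, f p ∂κ ≠ ⊤ := by
      have hle9 : ∫⁻ p, f p ∂κ ≤ ∫⁻ p, f p ∂q :=
        lintegral_mono' Measure.restrict_le_self (le_refl _)
      exact (lt_of_le_of_lt hle9 hIq_fin).ne
    have hIrest_fin : ∫⁻ p, f p ∂(q.restrict Sᶜ) ≠ ⊤ := by
      have hle9 : ∫⁻ p, f p ∂(q.restrict Sᶜ) ≤ ∫⁻ p, f p ∂q :=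
        lintegral_mono' Measure.restrict_le_self (le_refl _)
      exact (lt_of_le_of_lt hle9 hIq_fin).ne
    have hIq_split : ∫⁻ p, f p ∂q = ∫⁻ p, f p ∂(q.restrict Sᶜ) + ∫⁻ p, f p ∂κ := by
      conv_lhs => rw [← Measure.restrict_compl_add_restrict hSmeas (μ := q)]
      rw [lintegral_add_measure]
    have hIq'' : ∫⁻ p, f p ∂q'' = ∫⁻ p, f p ∂(q.restrict Sᶜ) + ((1-c) * ∫⁻ p, f p ∂κ
        + ∫⁻ p, f p ∂ξ) := by
      rw [hq''_def, lintegral_add_measure, lintegral_add_measure, lintegral_smul_measure,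
        smul_eq_mul, add_assoc]
    have hstrict : (1-c) * ∫⁻ p, f p ∂κ + ∫⁻ p, f p ∂ξ < ∫⁻ p, f p ∂κ := by
      have hcκcost : c * (ENNReal.ofReal (ϑ D₀) * q S) = ENNReal.ofReal (ϑ D₀) * d' := by
        rw [← mul_assoc, mul_comm c, mul_assoc, hcκ]
      have h1 : ENNReal.ofReal (ϑ D₁) * d' < ENNReal.ofReal (ϑ D₀) * d' := by
        rw [mul_comm _ d', mul_comm _ d']
        apply ENNReal.mul_lt_mul_right (ne_of_gt hd'0) hd'fin
        exact (ENNReal.ofReal_lt_ofReal_iff_of_nonneg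
          (hϑnonneg D₁ hD₁0)).2 (hϑmono (mem_Ici.2 hD₁0) (mem_Ici.2 hD₀0) hD₁D₀)
      have h2 : ∫⁻ p, f p ∂ξ < c * ∫⁻ p, f p ∂κ := by
        calc ∫⁻ p, f p ∂ξ ≤ ENNReal.ofReal (ϑ D₁) * d' := hξub
        _ < ENNReal.ofReal (ϑ D₀) * d' := h1
        _ = c * (ENNReal.ofReal (ϑ D₀) * q S) := hcκcost.symm
        _ ≤ c * ∫⁻ p, f p ∂κ := mul_le_mul_right hκlb c
      have h3 : (1-c) * ∫⁻ p, f p ∂κ + c * ∫⁻ p, f p ∂κ = ∫⁻ p, f p ∂κ := by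
        rw [← add_mul, tsub_add_cancel_of_le hc1, one_mul]
      have h4fin : (1-c) * ∫⁻ p, f p ∂κ ≠ ⊤ := by
        apply ne_top_of_le_ne_top hIκ_fin
        calc (1-c) * ∫⁻ p, f p ∂κ ≤ 1 * ∫⁻ p, f p ∂κ := mul_le_mul_left tsub_le_self _
        _ = ∫⁻ p, f p ∂κ := one_mul _
      calc (1-c) * ∫⁻ p, f p ∂κ + ∫⁻ p, f p ∂ξ
          < (1-c) * ∫⁻ p, f p ∂κ + c * ∫⁻ p, f p ∂κ := ENNReal.add_lt_add_left h4fin h2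
      _ = ∫⁻ p, f p ∂κ := h3
    have hfinal : ∫⁻ p, f p ∂q'' < ∫⁻ p, f p ∂q := by
      rw [hIq'', hIq_split]
      exact ENNReal.add_lt_add_left hIrest_fin hstrict
    exact absurd hcost (not_le.2 hfinal)
  -- CLAIM 2 : the diagonal is q-null
  have hdiag : q {p : Eucl (n+1) × Eucl (n+1) | p.1 = p.2} = 0 := by
    set Δ := {p : Eucl (n+1) × Eucl (n+1) | p.1 = p.2} with hΔ_def
    have hΔmeas : MeasurableSet Δ := (isClosed_eq continuous_fst continuous_snd).measurableSet
    set σ := Measure.map Prod.fst (q.restrict Δ) with hσ_def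
    have hfs : (Prod.fst : Eucl (n+1) × Eucl (n+1) → Eucl (n+1)) =ᵐ[q.restrict Δ] Prod.snd := by
      filter_upwards [ae_restrict_mem hΔmeas] with p hp
      exact hp
    have hσ₂ : σ = Measure.map Prod.snd (q.restrict Δ) := Measure.map_congr hfs
    have hσμ : σ ≤ μ :=
      le_trans (Measure.map_mono Measure.restrict_le_self measurable_fst) hfst
    have hσν : σ ≤ ν := by
      rw [hσ₂, ← hsnd]
      exact Measure.map_mono Measure.restrict_le_self measurable_snd
    obtain ⟨S, hSm, hμS, hνS⟩ := hsing
    have h1 : σ S = 0 := le_antisymm (le_trans (Measure.le_iff'.1 hσμ S) hμS.le) zero_le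
    have h2 : σ Sᶜ = 0 := le_antisymm (le_trans (Measure.le_iff'.1 hσν Sᶜ) hνS.le) zero_le
    have h3 : σ Set.univ = 0 := by
      have := measure_union_le (μ := σ) S Sᶜ
      rw [Set.union_compl_self, h1, h2] at this
      simpa using this
    have h4 : σ Set.univ = q Δ := by
      rw [hσ_def, Measure.map_apply measurable_fst MeasurableSet.univ, Set.preimage_univ,
        Measure.restrict_apply MeasurableSet.univ, Set.univ_inter]
    rw [hΔ_def] at h4 ⊢
    rw [← h4, h3]
  -- q is concentrated on its topological support
  have hsptq : q {p : Eucl (n+1) × Eucl (n+1) |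
      ¬ ∀ r : ℝ, 0 < r → 0 < q (Metric.ball p r)} = 0 := OptSemiAux.meas_sptCompl q
  -- the exterior-ball sets are μ-null
  set N : ℝ → Set (Eucl (n+1)) := fun δ =>
    {x | x ∈ C ∧ ∃ u : Eucl (n+1), ‖u‖ = 1 ∧ Metric.ball (x + δ • u) δ ∩ C = ∅} with hN_def
  have hNnull : ∀ k : ℕ, μ (N (1/((k:ℝ)+1))) = 0 := by
    intro k
    obtain ⟨ι, hι, F, hF, hsub⟩ := OptSemiAux.rectCover C (δ := 1/((k:ℝ)+1)) (by positivity)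
    refine measure_mono_null hsub ?_
    haveI := hι
    apply measure_iUnion_null
    intro t
    obtain ⟨K, hK⟩ := hF t
    exact hsmall (F t) K hK
  -- main inclusion
  have hincl : {p : Eucl (n+1) × Eucl (n+1) | p.1 ∈ C} ⊆
      ({p : Eucl (n+1) × Eucl (n+1) | ¬ ∀ r : ℝ, 0 < r → 0 < q (Metric.ball p r)}
        ∪ {p : Eucl (n+1) × Eucl (n+1) | p.1 = p.2})
        ∪ (Prod.fst ⁻¹' ⋃ k : ℕ, N (1/((k:ℝ)+1))) := by
    intro p hp
    by_cases hsp : ∀ r : ℝ, 0 < r → 0 < q (Metric.ball p r)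
    swap
    · exact Or.inl (Or.inl hsp)
    by_cases hdg : p.1 = p.2
    · exact Or.inl (Or.inr hdg)
    right
    have hkey : ∀ x' ∈ C, ‖p.1 - p.2‖ ≤ ‖x' - p.2‖ := fun x' hx' =>
      claim1 p.1 p.2 x' hsp hx'
    have hpos : 0 < ‖p.1 - p.2‖ := by
      rw [norm_pos_iff]
      exact sub_ne_zero.2 hdg
    obtain ⟨k, hk⟩ : ∃ k : ℕ, 1/((k:ℝ)+1) < ‖p.1 - p.2‖ := exists_nat_one_div_lt hpos
    refine mem_preimage.2 (mem_iUnion.2 ⟨k, ?_⟩)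
    set δ' : ℝ := 1/((k:ℝ)+1) with hδ'_def
    have hδ' : 0 < δ' := by positivity
    refine ⟨hp, ?_⟩
    set w := p.2 - p.1 with hw_def
    have hww : ‖w‖ = ‖p.1 - p.2‖ := norm_sub_rev _ _
    have hw0 : 0 < ‖w‖ := by rw [hww]; exact hpos
    refine ⟨‖w‖⁻¹ • w, ?_, ?_⟩
    · rw [norm_smul, norm_inv, norm_norm, inv_mul_cancel₀ hw0.ne']
    · apply Set.eq_empty_iff_forall_notMem.2
      rintro z ⟨hz1, hz2⟩
      have hcenter : p.1 + δ' • (‖w‖⁻¹ • w) - p.2 = (δ' * ‖w‖⁻¹ - 1) • w := by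
        rw [smul_smul, sub_smul, one_smul, hw_def]
        abel
      have hcnorm : ‖p.1 + δ' • (‖w‖⁻¹ • w) - p.2‖ = ‖w‖ - δ' := by
        rw [hcenter, norm_smul, Real.norm_eq_abs]
        have hle : δ' * ‖w‖⁻¹ ≤ 1 := by
          have hδw : δ' ≤ ‖w‖ := by rw [hww]; exact hk.le
          have h9 : δ' * ‖w‖⁻¹ ≤ ‖w‖ * ‖w‖⁻¹ :=
            mul_le_mul_of_nonneg_right hδw (by positivity)
          rw [mul_inv_cancel₀ hw0.ne'] at h9
          exact h9
        have h10 : δ' * ‖w‖⁻¹ - 1 ≤ 0 := by linarith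
        rw [abs_of_nonpos h10, neg_sub]
        field_simp
      have hzb : ‖z - p.2‖ < ‖w‖ := by
        have h1 : dist z (p.1 + δ' • (‖w‖⁻¹ • w)) < δ' := Metric.mem_ball.1 hz1
        calc ‖z - p.2‖ = dist z p.2 := (dist_eq_norm _ _).symm
        _ ≤ dist z (p.1 + δ' • (‖w‖⁻¹ • w)) + dist (p.1 + δ' • (‖w‖⁻¹ • w)) p.2 :=
          dist_triangle _ _ _
        _ < δ' + (‖w‖ - δ') := by
          rw [dist_eq_norm (p.1 + δ' • (‖w‖⁻¹ • w)) p.2, hcnorm]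
          linarith
        _ = ‖w‖ := by ring
      have := hkey z hz2
      rw [hww] at hzb
      linarith
  -- η gives no mass to C
  have hηC : η C = 0 := by
    have hη1 : η C = q (Prod.fst ⁻¹' C) := Measure.map_apply measurable_fst hCmeas
    have hμN : μ (⋃ k : ℕ, N (1/((k:ℝ)+1))) = 0 := measure_iUnion_null hNnull
    obtain ⟨M', hM'sub, hM'meas, hM'0⟩ := exists_measurable_superset_of_null hμN
    have hqM' : q (Prod.fst ⁻¹' M') = 0 := by
      have h5 : q (Prod.fst ⁻¹' M') = η M' := (Measure.map_apply measurable_fst hM'meas).symm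
      rw [h5]
      exact le_antisymm (le_trans (Measure.le_iff'.1 hfst M') hM'0.le) zero_le
    rw [hη1]
    have hsub2 : Prod.fst ⁻¹' C ⊆
        ({p : Eucl (n+1) × Eucl (n+1) | ¬ ∀ r : ℝ, 0 < r → 0 < q (Metric.ball p r)}
          ∪ {p : Eucl (n+1) × Eucl (n+1) | p.1 = p.2}) ∪ Prod.fst ⁻¹' M' := by
      intro p hp
      rcases hincl hp with (h | h) | h
      · exact Or.inl (Or.inl h)
      · exact Or.inl (Or.inr h)
      · exact Or.inr (mem_preimage.2 (hM'sub (mem_preimage.1 h)))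
    refine measure_mono_null hsub2 ?_
    exact measure_union_null (measure_union_null hsptq hdiag) hqM'
  -- conclusion
  refine ⟨Cᶜ, hCmeas.compl, ?_⟩
  have hθCc : θ Cᶜ = 0 := by
    have h6 := OptSemiAux.meas_sptCompl θ
    have h7 : Cᶜ = {x : Eucl (n+1) | ¬ ∀ r : ℝ, 0 < r → 0 < θ (Metric.ball x r)} := rfl
    rw [h7]
    exact h6
  ext s hs
  rw [Measure.restrict_apply hs]
  have h1 : μ (s ∩ Cᶜ) = θ (s ∩ Cᶜ) + η (s ∩ Cᶜ) := by
    conv_lhs => rw [← hθη]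
    rw [Measure.add_apply]
  have hθs : θ (s ∩ Cᶜ) = 0 := measure_mono_null inter_subset_right hθCc
  have hηs : η s = η (s ∩ Cᶜ) := by
    have h2 : η (s ∩ C) = 0 := measure_mono_null inter_subset_right hηC
    have h3 := measure_inter_add_diff (μ := η) s hCmeas
    rw [diff_eq] at h3
    rw [← h3, h2, zero_add]
  rw [h1, hθs, zero_add, ← hηs]
end
end

section
/- Let m be a finite Borel measure on [0,∞). Then there exists a function ϑ : [0,∞) → [0,∞) which is continuous, concave, strictly increasing, satisfies ϑ(0) = 0 and lim_{x→∞} ϑ(x) = ∞, and such that ∫_{[0,∞)} ϑ(x) m(dx) < ∞. -/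
open MeasureTheory Filter Set

section Aux

variable (m : Measure ℝ) [IsFiniteMeasure m]

/-- The tail measure of a finite measure tends to zero. -/
lemma aux_tail_small (ε : ENNReal) (hε : 0 < ε) : ∃ t : ℝ, ∀ s, t ≤ s → m (Set.Ioi s) ≤ ε := by
  have h1 : Tendsto (fun t : ℝ => m (Set.Iic t)) atTop (nhds (m Set.univ)) :=
    tendsto_measure_Iic_atTop m
  have h2 : Tendsto (fun t : ℝ => m Set.univ - m (Set.Iic t)) atTop
      (nhds (m Set.univ - m Set.univ)) :=
    ENNReal.Tendsto.sub tendsto_const_nhds h1 (Or.inl (measure_ne_top m _))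
  rw [tsub_self] at h2
  have h3 : ∀ᶠ t : ℝ in atTop, m Set.univ - m (Set.Iic t) ≤ ε :=
    h2.eventually (eventually_le_nhds hε)
  obtain ⟨t, ht⟩ := h3.exists_forall_of_atTop
  refine ⟨t, fun s hs => le_trans ?_ (ht s hs)⟩
  rw [← Set.compl_Iic, measure_compl measurableSet_Iic (measure_ne_top m _)]

/-- A rapidly increasing sequence with small tails. -/
lemma aux_seq : ∃ a : ℕ → ℝ, (∀ n, (2:ℝ) ^ n ≤ a n) ∧ (∀ n, 2 ^ (n+1) * a n ≤ a (n+1)) ∧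
    (∀ n, m (Set.Ioi (a n)) ≤ 2⁻¹ ^ n) := by
  have ht : ∀ n : ℕ, ∃ t : ℝ, ∀ s, t ≤ s → m (Set.Ioi s) ≤ 2⁻¹ ^ n := fun n =>
    aux_tail_small m _ (ENNReal.pow_pos (ENNReal.inv_pos.mpr (by norm_num)) n)
  choose t htt using ht
  set a : ℕ → ℝ := fun n => Nat.rec (max 1 (t 0)) (fun k ak => max (2 ^ (k+1) * ak) (t (k+1))) n
    with ha
  have ha0 : a 0 = max 1 (t 0) := rfl
  have haS : ∀ n, a (n+1) = max (2 ^ (n+1) * a n) (t (n+1)) := fun n => rfl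
  have hpow : ∀ n, (2:ℝ) ^ n ≤ a n := by
    intro n
    induction n with
    | zero => simpa [ha0] using le_max_left (1:ℝ) (t 0)
    | succ k ih =>
      rw [haS]
      refine le_trans ?_ (le_max_left _ _)
      have h1 : (1:ℝ) ≤ a k := le_trans (one_le_pow₀ (by norm_num)) ih
      nlinarith [pow_pos (by norm_num : (0:ℝ) < 2) (k+1)]
  have htle : ∀ n, t n ≤ a n := by
    intro n
    cases n with
    | zero => rw [ha0]; exact le_max_right _ _
    | succ k => rw [haS]; exact le_max_right _ _
  exact ⟨a, hpow, fun n => (haS n) ▸ le_max_left _ _, fun n => htt n _ (htle n)⟩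

end Aux

/-- For every finite Borel measure `m` on `[0,∞)` there is a continuous, concave,
strictly increasing function `ϑ : [0,∞) → [0,∞)` with `ϑ 0 = 0` and `ϑ → ∞` which is
`m`-integrable. -/
theorem exists_concave_integrable_of_finite_measure
    (m : Measure ℝ) [IsFiniteMeasure m] (hm : m (Set.Iio 0) = 0) :
    ∃ ϑ : ℝ → ℝ,
      ContinuousOn ϑ (Set.Ici 0) ∧
      ConcaveOn ℝ (Set.Ici 0) ϑ ∧
      StrictMonoOn ϑ (Set.Ici 0) ∧
      ϑ 0 = 0 ∧
      (∀ x : ℝ, 0 ≤ x → 0 ≤ ϑ x) ∧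
      Tendsto ϑ atTop atTop ∧
      (∫⁻ x, ENNReal.ofReal (ϑ x) ∂m) < ⊤ := by
  obtain ⟨a, hpow, hgrow, htail⟩ := aux_seq m
  have hapos : ∀ n, 0 < a n := fun n => lt_of_lt_of_le (pow_pos (by norm_num) n) (hpow n)
  have ha1 : ∀ n, 1 ≤ a n := fun n => le_trans (one_le_pow₀ (by norm_num)) (hpow n)
  have hamono : Monotone a := by
    apply monotone_nat_of_le_succ
    intro n
    refine le_trans ?_ (hgrow n)
    nlinarith [hapos n, pow_pos (show (0:ℝ) < 2 by norm_num) (n+1),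
      one_le_pow₀ (show (1:ℝ) ≤ 2 by norm_num) (n := n+1)]
  -- the function
  set ϑ : ℝ → ℝ := fun x => ∑' n, min x (a n) / a n with hϑ
  -- basic per-term estimates
  have habsmin : ∀ x y c : ℝ, |min x c - min y c| ≤ |x - y| := by
    intro x y c
    rcases le_total x c with h | h <;> rcases le_total y c with h' | h' <;>
      simp only [min_eq_left, min_eq_right, h, h'] <;>
      rw [abs_le] <;> constructor <;>
      cases abs_cases (x - y) <;> cases abs_cases (y - x) <;> linarith
  have hminabs : ∀ (x : ℝ) (n : ℕ), |min x (a n)| ≤ |x| := by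
    intro x n
    rcases le_total x (a n) with h | h
    · rw [min_eq_left h]
    · rw [min_eq_right h, abs_of_pos (hapos n)]
      exact le_trans h (le_abs_self x)
  have hinvle : ∀ n, (a n)⁻¹ ≤ (2⁻¹ : ℝ) ^ n := by
    intro n
    rw [inv_pow]
    exact inv_anti₀ (pow_pos (by norm_num) n) (hpow n)
  have hsummable : ∀ x : ℝ, Summable (fun n => min x (a n) / a n) := by
    intro x
    apply Summable.of_norm_bounded (g := fun n => |x| * (2⁻¹:ℝ) ^ n)
      ((summable_geometric_of_lt_one (by norm_num) (by norm_num)).mul_left _)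
    intro n
    rw [Real.norm_eq_abs, abs_div, abs_of_pos (hapos n), div_eq_mul_inv]
    exact mul_le_mul (hminabs x n) (hinvle n) (inv_nonneg.mpr (hapos n).le) (abs_nonneg x)
  have hL : Summable (fun n => (a n)⁻¹) :=
    Summable.of_nonneg_of_le (fun n => (inv_nonneg.mpr (hapos n).le)) hinvle
      (summable_geometric_of_lt_one (by norm_num) (by norm_num))
  -- nonnegativity of terms for x ≥ 0
  have htermnn : ∀ (x : ℝ), 0 ≤ x → ∀ n, 0 ≤ min x (a n) / a n := fun x hx n =>
    div_nonneg (le_min hx (hapos n).le) (hapos n).le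
  -- continuity via a Lipschitz estimate
  have hlip : ∀ x y : ℝ, |ϑ x - ϑ y| ≤ (∑' n, (a n)⁻¹) * |x - y| := by
    intro x y
    rw [hϑ]
    rw [← Summable.tsum_sub (hsummable x) (hsummable y)]
    have hb : ∀ n, |min x (a n) / a n - min y (a n) / a n| ≤ |x - y| * (a n)⁻¹ := by
      intro n
      rw [div_sub_div_same, abs_div, abs_of_pos (hapos n), div_eq_mul_inv]
      exact mul_le_mul_of_nonneg_right (habsmin x y (a n)) (inv_nonneg.mpr (hapos n).le)
    calc |∑' n, (min x (a n) / a n - min y (a n) / a n)|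
        ≤ ∑' n, |min x (a n) / a n - min y (a n) / a n| := by
          have hs : Summable fun n => ‖min x (a n) / a n - min y (a n) / a n‖ := by
            simp only [Real.norm_eq_abs]
            exact Summable.of_nonneg_of_le (fun n => abs_nonneg _) hb (hL.mul_left _)
          have := norm_tsum_le_tsum_norm hs
          simpa only [Real.norm_eq_abs] using this
      _ ≤ ∑' n, |x - y| * (a n)⁻¹ :=
          Summable.tsum_le_tsum hb (Summable.of_nonneg_of_le (fun n => abs_nonneg _) hb (hL.mul_left _))
            (hL.mul_left _)
      _ = |x - y| * ∑' n, (a n)⁻¹ := tsum_mul_left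
      _ = (∑' n, (a n)⁻¹) * |x - y| := mul_comm _ _
  have hcont : Continuous ϑ := by
    have hLnn : 0 ≤ ∑' n, (a n)⁻¹ := tsum_nonneg fun n => (inv_nonneg.mpr (hapos n).le)
    refine (LipschitzWith.of_dist_le_mul (K := (∑' n, (a n)⁻¹).toNNReal) ?_).continuous
    intro x y
    rw [Real.dist_eq, Real.dist_eq, Real.coe_toNNReal _ hLnn]
    exact hlip x y
  -- concavity
  have hconc : ConcaveOn ℝ (Set.Ici 0) ϑ := by
    refine ⟨convex_Ici 0, ?_⟩
    intro x hx y hy p q hp hq hpq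
    simp only [smul_eq_mul, hϑ]
    have h1 : ∀ n, p * (min x (a n) / a n) + q * (min y (a n) / a n)
        ≤ min (p * x + q * y) (a n) / a n := by
      intro n
      rw [mul_div_assoc', mul_div_assoc', ← add_div]
      rw [div_le_div_iff_of_pos_right (hapos n)]
      refine le_min ?_ ?_
      · exact add_le_add (mul_le_mul_of_nonneg_left (min_le_left x (a n)) hp)
          (mul_le_mul_of_nonneg_left (min_le_left y (a n)) hq)
      · calc p * min x (a n) + q * min y (a n)
            ≤ p * a n + q * a n :=
              add_le_add (mul_le_mul_of_nonneg_left (min_le_right x (a n)) hp)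
                (mul_le_mul_of_nonneg_left (min_le_right y (a n)) hq)
          _ = a n := by rw [← add_mul, hpq, one_mul]
    calc p * ϑ x + q * ϑ y
        = ∑' n, (p * (min x (a n) / a n) + q * (min y (a n) / a n)) := by
          rw [hϑ, ← tsum_mul_left, ← tsum_mul_left,
            Summable.tsum_add ((hsummable x).mul_left p) ((hsummable y).mul_left q)]
      _ ≤ ∑' n, min (p * x + q * y) (a n) / a n :=
          Summable.tsum_le_tsum h1 (((hsummable x).mul_left p).add ((hsummable y).mul_left q))
            (hsummable _)
  -- strict monotonicity
  have hmonoterm : ∀ (x y : ℝ), x ≤ y → ∀ n, min x (a n) / a n ≤ min y (a n) / a n :=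
    fun x y hxy n => (div_le_div_iff_of_pos_right (hapos n)).mpr (min_le_min hxy le_rfl)
  have hsmono : StrictMonoOn ϑ (Set.Ici 0) := by
    intro x hx y hy hxy
    obtain ⟨N, hN⟩ := exists_nat_ge y
    have hyN : y ≤ a N := by
      refine hN.trans (le_trans ?_ (hpow N))
      exact_mod_cast (Nat.lt_two_pow_self (n := N)).le
    have hlt : min x (a N) / a N < min y (a N) / a N := by
      rw [min_eq_left (le_trans hxy.le hyN), min_eq_left hyN]
      exact (div_lt_div_iff_of_pos_right (hapos N)).mpr hxy
    exact Summable.tsum_lt_tsum (hmonoterm x y hxy.le) hlt (hsummable x) (hsummable y)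
  -- value at zero
  have hzero : ϑ 0 = 0 := by
    have h0 : ∀ n : ℕ, min (0:ℝ) (a n) / a n = 0 := by
      intro n
      rw [min_eq_left (hapos n).le, zero_div]
    rw [hϑ]
    simp only [h0, tsum_zero]
  -- nonnegativity
  have hnn : ∀ x : ℝ, 0 ≤ x → 0 ≤ ϑ x := fun x hx => tsum_nonneg (htermnn x hx)
  -- tendsto atTop
  have htop : Tendsto ϑ atTop atTop := by
    rw [tendsto_atTop]
    intro b
    obtain ⟨N, hN⟩ := exists_nat_ge b
    filter_upwards [eventually_ge_atTop (a N)] with x hxN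
    have hx0 : (0:ℝ) ≤ x := le_trans (hapos N).le hxN
    have hsum1 : ∀ n ∈ Finset.range (N+1), min x (a n) / a n = 1 := by
      intro n hn
      rw [min_eq_right (le_trans (hamono (Nat.lt_succ_iff.mp (Finset.mem_range.mp hn))) hxN),
        div_self (hapos n).ne']
    calc b ≤ (N:ℝ) := hN
      _ ≤ (N:ℝ) + 1 := by linarith
      _ = ∑ n ∈ Finset.range (N+1), min x (a n) / a n := by
          rw [Finset.sum_congr rfl hsum1]
          simp
      _ ≤ ϑ x := Summable.sum_le_tsum _ (fun n _ => htermnn x hx0 n) (hsummable x)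
  -- the integral estimate
  have hmeas : ∀ n : ℕ, Measurable fun x : ℝ => ENNReal.ofReal (min x (a n) / a n) := fun n =>
    ENNReal.measurable_ofReal.comp ((measurable_id.min measurable_const).div_const (a n))
  have hsplit : (∫⁻ x, ENNReal.ofReal (ϑ x) ∂m)
      = ∫⁻ x in Set.Ici 0, ENNReal.ofReal (ϑ x) ∂m := by
    rw [← lintegral_add_compl (fun x => ENNReal.ofReal (ϑ x)) measurableSet_Ici (μ := m),
      Set.compl_Ici, setLIntegral_measure_zero _ _ hm, add_zero]
  have hpt : ∀ x ∈ Set.Ici (0:ℝ),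
      ENNReal.ofReal (ϑ x) = ∑' n, ENNReal.ofReal (min x (a n) / a n) := fun x hx =>
    ENNReal.ofReal_tsum_of_nonneg (htermnn x hx) (hsummable x)
  have hIbound : ∀ n : ℕ, (∫⁻ x in Set.Ici 0, ENNReal.ofReal (min x (a n) / a n) ∂m)
      ≤ 2⁻¹ ^ n * (m Set.univ + 2) := by
    intro n
    match n with
    | 0 =>
      have hb : ∀ x : ℝ, ENNReal.ofReal (min x (a 0) / a 0) ≤ 1 := by
        intro x
        refine le_trans (ENNReal.ofReal_le_ofReal ?_) (by norm_num : ENNReal.ofReal 1 ≤ 1)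
        rw [div_le_one (hapos 0)]
        exact min_le_right _ _
      calc (∫⁻ x in Set.Ici 0, ENNReal.ofReal (min x (a 0) / a 0) ∂m)
          ≤ ∫⁻ _ in Set.Ici 0, 1 ∂m := lintegral_mono fun x => hb x
        _ = m (Set.Ici 0) := by simp
        _ ≤ 2⁻¹ ^ 0 * (m Set.univ + 2) := by
            simp only [pow_zero, one_mul]
            exact le_trans (measure_mono (Set.subset_univ _)) le_self_add
    | (k+1) =>
      have hdivle : a k / a (k+1) ≤ (2⁻¹:ℝ) ^ (k+1) := by
        have h1 : a k / a (k+1) ≤ a k / (2 ^ (k+1) * a k) :=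
          div_le_div_of_nonneg_left (hapos k).le
            (mul_pos (by positivity) (hapos k)) (hgrow k)
        refine le_trans h1 (le_of_eq ?_)
        rw [mul_comm, ← div_div, div_self (hapos k).ne', inv_pow]
        exact one_div _
      have hb : ∀ x : ℝ, ENNReal.ofReal (min x (a (k+1)) / a (k+1))
          ≤ ENNReal.ofReal ((2⁻¹:ℝ) ^ (k+1))
            + (Set.Ioi (a k)).indicator (fun _ => 1) x := by
        intro x
        rcases le_or_gt x (a k) with hxk | hxk
        · have : min x (a (k+1)) / a (k+1) ≤ (2⁻¹:ℝ) ^ (k+1) := by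
            refine le_trans ?_ hdivle
            rw [div_le_div_iff_of_pos_right (hapos (k+1))]
            exact le_trans (min_le_left _ _) hxk
          exact le_trans (ENNReal.ofReal_le_ofReal this) le_self_add
        · have h1 : ENNReal.ofReal (min x (a (k+1)) / a (k+1)) ≤ 1 := by
            refine le_trans (ENNReal.ofReal_le_ofReal ?_)
              (by norm_num : ENNReal.ofReal 1 ≤ 1)
            rw [div_le_one (hapos (k+1))]
            exact min_le_right _ _
          rw [Set.indicator_of_mem (Set.mem_Ioi.mpr hxk)]
          exact le_trans h1 le_add_self
      calc (∫⁻ x in Set.Ici 0, ENNReal.ofReal (min x (a (k+1)) / a (k+1)) ∂m)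
          ≤ ∫⁻ x in Set.Ici 0, (ENNReal.ofReal ((2⁻¹:ℝ) ^ (k+1))
              + (Set.Ioi (a k)).indicator (fun _ => 1) x) ∂m := lintegral_mono fun x => hb x
        _ = ENNReal.ofReal ((2⁻¹:ℝ) ^ (k+1)) * m (Set.Ici 0)
              + (m.restrict (Set.Ici 0)) (Set.Ioi (a k)) := by
            rw [lintegral_add_left measurable_const, setLIntegral_const,
              lintegral_indicator measurableSet_Ioi, setLIntegral_one]
        _ ≤ 2⁻¹ ^ (k+1) * m Set.univ + 2⁻¹ ^ k := by
            refine add_le_add (mul_le_mul ?_ (measure_mono (Set.subset_univ _)) (zero_le)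
              (zero_le)) (le_trans (Measure.restrict_apply_le _ _) (htail k))
            calc ENNReal.ofReal ((2⁻¹:ℝ) ^ (k+1)) = (ENNReal.ofReal 2⁻¹) ^ (k+1) := by
                  rw [ENNReal.ofReal_pow (by norm_num)]
              _ = (2⁻¹ : ENNReal) ^ (k+1) := by
                  rw [ENNReal.ofReal_inv_of_pos (by norm_num)]
                  norm_num
              _ ≤ (2⁻¹ : ENNReal) ^ (k+1) := le_rfl
        _ = 2⁻¹ ^ (k+1) * (m Set.univ + 2) := by
            rw [mul_add]
            congr 1
            rw [pow_succ, mul_assoc, ENNReal.inv_mul_cancel (by norm_num) (by norm_num), mul_one]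
  have hint : (∫⁻ x, ENNReal.ofReal (ϑ x) ∂m) < ⊤ := by
    rw [hsplit, setLIntegral_congr_fun measurableSet_Ici hpt,
      lintegral_tsum (fun n => (hmeas n).aemeasurable)]
    calc (∑' n, ∫⁻ x in Set.Ici 0, ENNReal.ofReal (min x (a n) / a n) ∂m)
        ≤ ∑' n : ℕ, 2⁻¹ ^ n * (m Set.univ + 2) := ENNReal.tsum_le_tsum hIbound
      _ = (∑' n : ℕ, (2⁻¹:ENNReal) ^ n) * (m Set.univ + 2) := ENNReal.tsum_mul_right
      _ < ⊤ := by
          rw [ENNReal.tsum_geometric]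
          refine ENNReal.mul_lt_top ?_ ?_
          · rw [ENNReal.one_sub_inv_two, inv_inv]
            exact (by norm_num : (2:ENNReal) < ⊤)
          · exact ENNReal.add_lt_top.mpr ⟨measure_lt_top m _, by norm_num⟩
  exact ⟨ϑ, hcont.continuousOn, hconc, hsmono, hzero, hnn, htop, hint⟩
end
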